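/- Let X be a metric space, Y a normed vector space, F₁, F₂ : X ⇒ Y and (x̄, ȳ) ∈ Graph F₁ ∩ Graph F₂. Assume: (i) Graph F₁, Graph F₂ are locally complete around (x̄, ȳ); (ii) F₁ is metrically regular around (x̄, ȳ) with constant l > 0; (iii) F₂ has the Aubin property around (x̄, ȳ) with constant m > 0; (iv) lm < 1. Then there exist α, β > 0 such that for every x ∈ B(x̄, α), d(x, Fix(F₁⁻¹F₂)) ≤ (l⁻¹ − m)⁻¹ · d(F₁(x) ∩ B(ȳ, β), F₂(x)), where Fix(F₁⁻¹F₂) := {x ∈ X : F₁(x) ∩ F₂(x) ≠ ∅} and d(A, B) := inf{‖a − b‖ : a ∈ A, b ∈ B}. -/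

import Mathlib

open Metric Set Filter Topology ENNReal

noncomputable def exc {α : Type*} [PseudoEMetricSpace α] (A B : Set α) : ℝ≥0∞ :=
  ⨆ a ∈ A, EMetric.infEdist a B

noncomputable def setDist2 {α : Type*} [PseudoEMetricSpace α] (A B : Set α) : ℝ≥0∞ :=
  ⨅ a ∈ A, EMetric.infEdist a B

lemma le_exc' {α : Type*} [PseudoEMetricSpace α] {A B : Set α} {a : α} (h : a ∈ A) :
    EMetric.infEdist a B ≤ exc A B := le_iSup₂ (f := fun a _ => EMetric.infEdist a B) a h

lemma setDist2_lt {α : Type*} [PseudoEMetricSpace α] {A B : Set α} {c : ℝ≥0∞}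
    (h : setDist2 A B < c) : ∃ a ∈ A, EMetric.infEdist a B < c := by
  simpa [setDist2, iInf_lt_iff] using h

lemma seq_exists {σ : Type*} (P : ℕ → σ → Prop) (R : ℕ → σ → σ → Prop) (p0 : σ)
    (h0 : P 0 p0) (step : ∀ n p, P n p → ∃ p', P (n+1) p' ∧ R n p p') :
    ∃ f : ℕ → σ, f 0 = p0 ∧ (∀ n, P n (f n)) ∧ ∀ n, R n (f n) (f (n+1)) := by
  choose! g hg1 hg2 using step
  let f : ℕ → σ := fun n => Nat.rec p0 (fun k ih => g k ih) n
  have hP : ∀ n, P n (f n) := by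
    intro n
    induction n with
    | zero => exact h0
    | succ k ih => exact hg1 k _ ih
  exact ⟨f, rfl, hP, fun n => hg2 n (f n) (hP n)⟩

set_option maxHeartbeats 1000000 in
lemma iterate_aux {X Y : Type*} [MetricSpace X] [NormedAddCommGroup Y]
    (F₁ F₂ : X → Set Y) (x₀ : X) (y₀ : Y) (l m : ℝ) (hl : 0 < l) (hm : 0 < m)
    (r₁ r₂ : ℝ)
    (hc₁ : IsComplete ({p : X × Y | p.2 ∈ F₁ p.1} ∩ Metric.closedBall (x₀, y₀) r₁))
    (hc₂ : IsComplete ({p : X × Y | p.2 ∈ F₂ p.1} ∩ Metric.closedBall (x₀, y₀) r₂))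
    (U₁ : Set X) (V₁ : Set Y) (U₂ : Set X) (V₂ : Set Y)
    (hregs : ∀ x ∈ U₁, ∀ y ∈ V₁, EMetric.infEdist x {x' | y ∈ F₁ x'} ≤
        ENNReal.ofReal l * EMetric.infEdist y (F₁ x))
    (hAubs : ∀ x ∈ U₂, ∀ u ∈ U₂, exc (F₂ x ∩ V₂) (F₂ u) ≤ ENNReal.ofReal (m * dist x u))
    (ρ : ℝ) (hρr₁ : ρ ≤ r₁) (hρr₂ : ρ ≤ r₂)
    (hρU₁ : Metric.closedBall x₀ ρ ⊆ U₁) (hρV₁ : Metric.closedBall y₀ ρ ⊆ V₁)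
    (hρU₂ : Metric.closedBall x₀ ρ ⊆ U₂) (hρV₂ : Metric.closedBall y₀ ρ ⊆ V₂)
    (x : X) (y₁ c₀ : Y) (hy₁F : y₁ ∈ F₁ x) (hc₀F : c₀ ∈ F₂ x)
    (q C T : ℝ) (hq0 : 0 < q) (hq1 : q < 1) (hC0 : 0 < C) (hT0 : 0 < T)
    (hdy₁c₀ : dist y₁ c₀ ≤ T)
    (hlC : l * T < C) (hmC : m * C < T * q)
    (hmx : ∀ a : X, dist x a ≤ C / (1 - q) → a ∈ Metric.closedBall x₀ ρ)
    (hmy : ∀ b : Y, dist y₁ b ≤ T / (1 - q) + T → b ∈ Metric.closedBall y₀ ρ) :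
    ∃ z : X, (F₁ z ∩ F₂ z).Nonempty ∧ dist x z ≤ C / (1 - q) := by
  have h1q0 : 0 < 1 - q := by linarith
  have hstep : ∀ n : ℕ, ∀ p : X × Y × Y,
      (p.2.1 ∈ F₁ p.1 ∧ p.2.2 ∈ F₂ p.1 ∧ dist p.2.1 p.2.2 ≤ T * q ^ n ∧
       dist x p.1 ≤ C * (1 - q ^ n) / (1 - q) ∧
       dist y₁ p.2.1 ≤ T * (1 - q ^ n) / (1 - q)) →
      ∃ p' : X × Y × Y,
        (p'.2.1 ∈ F₁ p'.1 ∧ p'.2.2 ∈ F₂ p'.1 ∧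
         dist p'.2.1 p'.2.2 ≤ T * q ^ (n + 1) ∧
         dist x p'.1 ≤ C * (1 - q ^ (n + 1)) / (1 - q) ∧
         dist y₁ p'.2.1 ≤ T * (1 - q ^ (n + 1)) / (1 - q)) ∧
        (p'.2.1 = p.2.2 ∧ dist p.1 p'.1 ≤ C * q ^ n) := by
    rintro n ⟨a, b, c⟩ ⟨hbF, hcF, hbc, hxa, hyb⟩
    simp only at hbF hcF hbc hxa hyb
    have hqn0 : 0 < q ^ n := pow_pos hq0 n
    have hqn1 : q ^ n ≤ 1 := pow_le_one₀ hq0.le hq1.le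
    have hqs1 : q ^ (n + 1) ≤ 1 := pow_le_one₀ hq0.le hq1.le
    have hqs0 : 0 < q ^ (n + 1) := pow_pos hq0 (n + 1)
    have hxa8 : dist x a ≤ C / (1 - q) := by
      have h1 : C * (1 - q ^ n) / (1 - q) ≤ C / (1 - q) := by gcongr; nlinarith
      linarith
    have haB : a ∈ Metric.closedBall x₀ ρ := hmx a hxa8
    have hyc : dist y₁ c ≤ T / (1 - q) + T := by
      have h1 : T * (1 - q ^ n) / (1 - q) ≤ T / (1 - q) := by gcongr; nlinarith
      have h2 : T * q ^ n ≤ T := by nlinarith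
      calc dist y₁ c ≤ dist y₁ b + dist b c := dist_triangle _ _ _
        _ ≤ T / (1 - q) + T := by linarith
    have hcB : c ∈ Metric.closedBall y₀ ρ := hmy c hyc
    have hreg1 := hregs a (hρU₁ haB) c (hρV₁ hcB)
    have h5 : EMetric.infEdist a {x' | c ∈ F₁ x'} < ENNReal.ofReal (C * q ^ n) := by
      have h51 : EMetric.infEdist c (F₁ a) ≤ ENNReal.ofReal (T * q ^ n) := by
        refine le_trans (EMetric.infEdist_le_edist_of_mem hbF) ?_
        rw [edist_dist, dist_comm]
        exact ENNReal.ofReal_le_ofReal hbc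
      calc EMetric.infEdist a {x' | c ∈ F₁ x'}
          ≤ ENNReal.ofReal l * EMetric.infEdist c (F₁ a) := hreg1
        _ ≤ ENNReal.ofReal l * ENNReal.ofReal (T * q ^ n) := mul_le_mul_right h51 _
        _ = ENNReal.ofReal (l * (T * q ^ n)) := (ENNReal.ofReal_mul hl.le).symm
        _ < ENNReal.ofReal (C * q ^ n) := by
            rw [ENNReal.ofReal_lt_ofReal_iff (mul_pos hC0 hqn0)]
            nlinarith
    obtain ⟨a', ha'F, ha'd⟩ := EMetric.infEdist_lt_iff.1 h5
    have hda' : dist a a' ≤ C * q ^ n := (edist_lt_ofReal.1 ha'd).le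
    have halg : C * (1 - q ^ n) / (1 - q) + C * q ^ n = C * (1 - q ^ (n + 1)) / (1 - q) := by
      rw [pow_succ]
      field_simp
      ring
    have hxa' : dist x a' ≤ C * (1 - q ^ (n + 1)) / (1 - q) := by
      calc dist x a' ≤ dist x a + dist a a' := dist_triangle _ _ _
        _ ≤ C * (1 - q ^ n) / (1 - q) + C * q ^ n := by linarith
        _ = _ := halg
    have ha'B : a' ∈ Metric.closedBall x₀ ρ := by
      apply hmx
      have h1 : C * (1 - q ^ (n + 1)) / (1 - q) ≤ C / (1 - q) := by gcongr; nlinarith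
      linarith
    have hA := hAubs a (hρU₂ haB) a' (hρU₂ ha'B)
    have h6 : EMetric.infEdist c (F₂ a') < ENNReal.ofReal (T * q ^ (n + 1)) := by
      calc EMetric.infEdist c (F₂ a') ≤ exc (F₂ a ∩ V₂) (F₂ a') := le_exc' ⟨hcF, hρV₂ hcB⟩
        _ ≤ ENNReal.ofReal (m * dist a a') := hA
        _ < ENNReal.ofReal (T * q ^ (n + 1)) := by
            rw [ENNReal.ofReal_lt_ofReal_iff (mul_pos hT0 hqs0)]
            have h61 : m * dist a a' ≤ m * (C * q ^ n) :=
              mul_le_mul_of_nonneg_left hda' hm.le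
            have h62 : (m * C) * q ^ n < (T * q) * q ^ n := by nlinarith
            calc m * dist a a' ≤ m * (C * q ^ n) := h61
              _ = (m * C) * q ^ n := by ring
              _ < (T * q) * q ^ n := h62
              _ = T * q ^ (n + 1) := by rw [pow_succ]; ring
    obtain ⟨c', hc'F, hc'd⟩ := EMetric.infEdist_lt_iff.1 h6
    have hdc' : dist c c' ≤ T * q ^ (n + 1) := (edist_lt_ofReal.1 hc'd).le
    have hyc' : dist y₁ c ≤ T * (1 - q ^ (n + 1)) / (1 - q) := by
      have halg2 : T * (1 - q ^ n) / (1 - q) + T * q ^ n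
          = T * (1 - q ^ (n + 1)) / (1 - q) := by
        rw [pow_succ]
        field_simp
        ring
      calc dist y₁ c ≤ dist y₁ b + dist b c := dist_triangle _ _ _
        _ ≤ T * (1 - q ^ n) / (1 - q) + T * q ^ n := by linarith
        _ = _ := halg2
    exact ⟨(a', c, c'), ⟨ha'F, hc'F, hdc', hxa', hyc'⟩, rfl, hda'⟩
  have good0 : ((x, y₁, c₀) : X × Y × Y).2.1 ∈ F₁ (x, y₁, c₀).1 ∧
      ((x, y₁, c₀) : X × Y × Y).2.2 ∈ F₂ (x, y₁, c₀).1 ∧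
      dist ((x, y₁, c₀) : X × Y × Y).2.1 (x, y₁, c₀).2.2 ≤ T * q ^ 0 ∧
      dist x ((x, y₁, c₀) : X × Y × Y).1 ≤ C * (1 - q ^ 0) / (1 - q) ∧
      dist y₁ ((x, y₁, c₀) : X × Y × Y).2.1 ≤ T * (1 - q ^ 0) / (1 - q) := by
    refine ⟨hy₁F, hc₀F, ?_, by simp, by simp⟩
    simpa using hdy₁c₀
  obtain ⟨f, hf0, hfP, hfR⟩ := seq_exists
    (fun n (p : X × Y × Y) =>
      p.2.1 ∈ F₁ p.1 ∧ p.2.2 ∈ F₂ p.1 ∧ dist p.2.1 p.2.2 ≤ T * q ^ n ∧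
      dist x p.1 ≤ C * (1 - q ^ n) / (1 - q) ∧
      dist y₁ p.2.1 ≤ T * (1 - q ^ n) / (1 - q))
    (fun n p p' => p'.2.1 = p.2.2 ∧ dist p.1 p'.1 ≤ C * q ^ n)
    (x, y₁, c₀) good0 hstep
  have hda : ∀ n, dist ((f n).1) ((f (n + 1)).1) ≤ C * q ^ n := fun n => (hfR n).2
  have hcb : ∀ n, (f (n + 1)).2.1 = (f n).2.2 := fun n => (hfR n).1
  have hdb : ∀ n, dist ((f n).2.1) ((f (n + 1)).2.1) ≤ T * q ^ n := by
    intro n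
    rw [hcb n]
    exact (hfP n).2.2.1
  have hdc : ∀ n, dist ((f n).2.2) ((f (n + 1)).2.2) ≤ (T * q) * q ^ n := by
    intro n
    have h1 := (hfP (n + 1)).2.2.1
    rw [hcb n] at h1
    calc dist ((f n).2.2) ((f (n + 1)).2.2) ≤ T * q ^ (n + 1) := h1
      _ = (T * q) * q ^ n := by rw [pow_succ]; ring
  have hcauchy_a : CauchySeq (fun n => (f n).1) := cauchySeq_of_le_geometric q C hq1 hda
  have hcauchy_b : CauchySeq (fun n => (f n).2.1) := cauchySeq_of_le_geometric q T hq1 hdb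
  have hcauchy_c : CauchySeq (fun n => (f n).2.2) :=
    cauchySeq_of_le_geometric q (T * q) hq1 hdc
  have hqn0' : ∀ n : ℕ, 0 < q ^ n := fun n => pow_pos hq0 n
  have hmema : ∀ n, (f n).1 ∈ Metric.closedBall x₀ ρ := by
    intro n
    apply hmx
    have h0 := (hfP n).2.2.2.1
    have h1 : C * (1 - q ^ n) / (1 - q) ≤ C / (1 - q) := by gcongr; nlinarith [hqn0' n]
    linarith
  have hmemb : ∀ n, (f n).2.1 ∈ Metric.closedBall y₀ ρ := by
    intro n
    apply hmy
    have h0 := (hfP n).2.2.2.2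
    have h1 : T * (1 - q ^ n) / (1 - q) ≤ T / (1 - q) := by gcongr; nlinarith [hqn0' n]
    linarith
  have hmemc : ∀ n, (f n).2.2 ∈ Metric.closedBall y₀ ρ := by
    intro n
    have h0 := hmemb (n + 1)
    rwa [hcb n] at h0
  obtain ⟨P, hPmem, hPt⟩ := cauchySeq_tendsto_of_isComplete hc₁
    (u := fun n => ((f n).1, (f n).2.1))
    (fun n => ⟨(hfP n).1, by
      rw [Metric.mem_closedBall, Prod.dist_eq]
      exact max_le (le_trans (Metric.mem_closedBall.1 (hmema n)) hρr₁)
        (le_trans (Metric.mem_closedBall.1 (hmemb n)) hρr₁)⟩)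
    (hcauchy_a.prodMk hcauchy_b)
  obtain ⟨Q, hQmem, hQt⟩ := cauchySeq_tendsto_of_isComplete hc₂
    (u := fun n => ((f n).1, (f n).2.2))
    (fun n => ⟨(hfP n).2.1, by
      rw [Metric.mem_closedBall, Prod.dist_eq]
      exact max_le (le_trans (Metric.mem_closedBall.1 (hmema n)) hρr₂)
        (le_trans (Metric.mem_closedBall.1 (hmemc n)) hρr₂)⟩)
    (hcauchy_a.prodMk hcauchy_c)
  have hta : Filter.Tendsto (fun n => (f n).1) Filter.atTop (nhds P.1) :=
    (continuous_fst.tendsto P).comp hPt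
  have htb : Filter.Tendsto (fun n => (f n).2.1) Filter.atTop (nhds P.2) :=
    (continuous_snd.tendsto P).comp hPt
  have hta2 : Filter.Tendsto (fun n => (f n).1) Filter.atTop (nhds Q.1) :=
    (continuous_fst.tendsto Q).comp hQt
  have htc : Filter.Tendsto (fun n => (f n).2.2) Filter.atTop (nhds Q.2) :=
    (continuous_snd.tendsto Q).comp hQt
  have htc2 : Filter.Tendsto (fun n => (f n).2.2) Filter.atTop (nhds P.2) := by
    have heq : (fun n => (f n).2.2) = fun n => (f (n + 1)).2.1 :=
      funext fun n => (hcb n).symm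
    rw [heq]
    exact htb.comp (Filter.tendsto_add_atTop_nat 1)
  have hQ1 : Q.1 = P.1 := tendsto_nhds_unique hta2 hta
  have hQ2 : Q.2 = P.2 := tendsto_nhds_unique htc htc2
  have hdxP : dist x P.1 ≤ C / (1 - q) := by
    have h0 := dist_le_of_le_geometric_of_tendsto₀ q C hq1 hda hta
    rw [hf0] at h0
    exact h0
  refine ⟨P.1, ⟨P.2, hPmem.1, ?_⟩, hdxP⟩
  have h0 : Q.2 ∈ F₂ Q.1 := hQmem.1
  rwa [hQ1, hQ2] at h0

set_option maxHeartbeats 3200000 in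
theorem stmt9 {X Y : Type*} [MetricSpace X] [NormedAddCommGroup Y]
    (F₁ F₂ : X → Set Y) (x₀ : X) (y₀ : Y)
    (h1 : y₀ ∈ F₁ x₀) (h2 : y₀ ∈ F₂ x₀)
    (l m : ℝ) (hl : 0 < l) (hm : 0 < m) (hlm : l * m < 1)
    (hcomp1 : ∃ r > (0:ℝ),
      IsComplete ({p : X × Y | p.2 ∈ F₁ p.1} ∩ Metric.closedBall (x₀, y₀) r))
    (hcomp2 : ∃ r > (0:ℝ),
      IsComplete ({p : X × Y | p.2 ∈ F₂ p.1} ∩ Metric.closedBall (x₀, y₀) r))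
    (hreg : ∃ U ∈ 𝓝 x₀, ∃ V ∈ 𝓝 y₀, ∀ x ∈ U, ∀ y ∈ V,
      EMetric.infEdist x {x' | y ∈ F₁ x'} ≤
        ENNReal.ofReal l * EMetric.infEdist y (F₁ x))
    (hAub : ∃ U ∈ 𝓝 x₀, ∃ V ∈ 𝓝 y₀, ∀ x ∈ U, ∀ u ∈ U,
      exc (F₂ x ∩ V) (F₂ u) ≤ ENNReal.ofReal (m * dist x u)) :
    ∃ α > (0:ℝ), ∃ β > (0:ℝ), ∀ x ∈ Metric.ball x₀ α,
      EMetric.infEdist x {x' | (F₁ x' ∩ F₂ x').Nonempty} ≤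
        ENNReal.ofReal (l⁻¹ - m)⁻¹ *
          setDist2 (F₁ x ∩ Metric.ball y₀ β) (F₂ x) := by
  obtain ⟨r₁, hr₁, hc₁⟩ := hcomp1
  obtain ⟨r₂, hr₂, hc₂⟩ := hcomp2
  obtain ⟨U₁, hU₁, V₁, hV₁, hregs⟩ := hreg
  obtain ⟨U₂, hU₂, V₂, hV₂, hAubs⟩ := hAub
  obtain ⟨ρ, hρ, hρr₁, hρr₂, hρU₁, hρV₁, hρU₂, hρV₂⟩ :
      ∃ ρ > (0:ℝ), ρ ≤ r₁ ∧ ρ ≤ r₂ ∧ closedBall x₀ ρ ⊆ U₁ ∧ closedBall y₀ ρ ⊆ V₁ ∧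
        closedBall x₀ ρ ⊆ U₂ ∧ closedBall y₀ ρ ⊆ V₂ := by
    obtain ⟨e₁, he₁, hbU₁⟩ := Metric.mem_nhds_iff.1 hU₁
    obtain ⟨e₂, he₂, hbV₁⟩ := Metric.mem_nhds_iff.1 hV₁
    obtain ⟨e₃, he₃, hbU₂⟩ := Metric.mem_nhds_iff.1 hU₂
    obtain ⟨e₄, he₄, hbV₂⟩ := Metric.mem_nhds_iff.1 hV₂
    refine ⟨min (min r₁ r₂) (min (min e₁ e₂) (min e₃ e₄) / 2), by positivity,
      le_trans (min_le_left _ _) (min_le_left _ _),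
      le_trans (min_le_left _ _) (min_le_right _ _), ?_, ?_, ?_, ?_⟩
    · refine subset_trans (closedBall_subset_ball ?_) hbU₁
      have h5 : min (min e₁ e₂) (min e₃ e₄) ≤ e₁ := le_trans (min_le_left _ _) (min_le_left _ _)
      have h6 := min_le_right (min r₁ r₂) (min (min e₁ e₂) (min e₃ e₄) / 2)
      linarith
    · refine subset_trans (closedBall_subset_ball ?_) hbV₁
      have h5 : min (min e₁ e₂) (min e₃ e₄) ≤ e₂ := le_trans (min_le_left _ _) (min_le_right _ _)
      have h6 := min_le_right (min r₁ r₂) (min (min e₁ e₂) (min e₃ e₄) / 2)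
      linarith
    · refine subset_trans (closedBall_subset_ball ?_) hbU₂
      have h5 : min (min e₁ e₂) (min e₃ e₄) ≤ e₃ := le_trans (min_le_right _ _) (min_le_left _ _)
      have h6 := min_le_right (min r₁ r₂) (min (min e₁ e₂) (min e₃ e₄) / 2)
      linarith
    · refine subset_trans (closedBall_subset_ball ?_) hbV₂
      have h5 : min (min e₁ e₂) (min e₃ e₄) ≤ e₄ := le_trans (min_le_right _ _) (min_le_right _ _)
      have h6 := min_le_right (min r₁ r₂) (min (min e₁ e₂) (min e₃ e₄) / 2)
      linarith
  obtain ⟨s, hsdef⟩ : ∃ s : ℝ, s = 1 - l * m := ⟨_, rfl⟩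
  have hs : 0 < s := by rw [hsdef]; nlinarith
  have hs1 : s ≤ 1 := by rw [hsdef]; nlinarith
  obtain ⟨α, hα, hα12s, hα12l⟩ :
      ∃ α > (0:ℝ), 12 * α ≤ ρ * s ∧ 12 * α ≤ ρ * (l * s) := by
    have hml : (0:ℝ) < min l 1 := lt_min hl one_pos
    refine ⟨ρ * s * min l 1 / 12, by positivity, ?_, ?_⟩
    · have h1 : min l 1 ≤ 1 := min_le_right _ _
      have h2 : (0:ℝ) ≤ ρ * s := by positivity
      linarith [mul_le_mul_of_nonneg_left h1 h2]
    · have h1 : min l 1 ≤ l := min_le_left _ _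
      have h2 : (0:ℝ) ≤ ρ * s := by positivity
      linarith [mul_le_mul_of_nonneg_left h1 h2]
  have hKinv : (l⁻¹ - m)⁻¹ = l / s := by
    have h0 : l⁻¹ - m = s / l := by
      field_simp [hsdef]
      linarith
    rw [h0, inv_div]
  have hKpos : 0 < (l⁻¹ - m)⁻¹ := by rw [hKinv]; positivity
  refine ⟨α, hα, ρ / 2, by positivity, ?_⟩
  intro x hx
  set Fix : Set X := {x' | (F₁ x' ∩ F₂ x').Nonempty} with hFixdef
  have hFix₀ : x₀ ∈ Fix := ⟨y₀, h1, h2⟩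
  set ε : ℝ≥0∞ := setDist2 (F₁ x ∩ Metric.ball y₀ (ρ/2)) (F₂ x) with hεdef
  set K : ℝ≥0∞ := ENNReal.ofReal (l⁻¹ - m)⁻¹ with hKdef
  by_cases hcase : edist x x₀ ≤ K * ε
  · exact le_trans (EMetric.infEdist_le_edist_of_mem hFix₀) hcase
  push_neg at hcase
  have hK0 : K ≠ 0 := by
    simp only [hKdef, ne_eq, ENNReal.ofReal_eq_zero, not_le]
    exact hKpos
  have hεtop : ε ≠ ⊤ := by
    intro h
    rw [h, ENNReal.mul_top hK0] at hcase
    exact not_top_lt hcase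
  obtain ⟨e, hedef⟩ : ∃ e : ℝ, e = ε.toReal := ⟨_, rfl⟩
  have he0 : 0 ≤ e := hedef ▸ ENNReal.toReal_nonneg
  have hεe : ε = ENNReal.ofReal e := by rw [hedef]; exact (ENNReal.ofReal_toReal hεtop).symm
  have hxd : dist x x₀ < α := mem_ball.1 hx
  have hel : e < α / l := by
    have hKl : ENNReal.ofReal l ≤ K := by
      apply ENNReal.ofReal_le_ofReal
      rw [hKinv, le_div_iff₀ hs]
      nlinarith
    have h7 : ENNReal.ofReal l * ε < ENNReal.ofReal α := by
      calc ENNReal.ofReal l * ε ≤ K * ε := mul_le_mul_left hKl ε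
        _ < edist x x₀ := hcase
        _ < ENNReal.ofReal α := by
            rw [edist_dist]
            exact ENNReal.ofReal_lt_ofReal_iff hα |>.2 hxd
    rw [hεe, ← ENNReal.ofReal_mul hl.le] at h7
    have := (ENNReal.ofReal_lt_ofReal_iff hα).1 h7
    rw [lt_div_iff₀ hl]
    nlinarith
  -- threshold for δ
  obtain ⟨δ₂, hδ₂pos, hδ₂1, hδ₂q, hδ₂α⟩ :
      ∃ δ₂ > (0:ℝ), δ₂ ≤ 1 ∧ l * m * (1 + δ₂)^2 ≤ (1 + l * m) / 2 ∧ δ₂ ≤ α / l := by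
    have hδ₂aux : 0 < ((1 + l * m) / 2 / (l * m) - 1) / 3 := by
      have : 1 < (1 + l * m) / 2 / (l * m) := by
        rw [lt_div_iff₀ (by positivity)]
        linarith
      linarith
    refine ⟨min (min 1 (((1 + l * m) / 2 / (l * m) - 1) / 3)) (α / l),
      lt_min (lt_min one_pos hδ₂aux) (by positivity),
      le_trans (min_le_left _ _) (min_le_left _ _), ?_, min_le_right _ _⟩
    set d := min (min 1 (((1 + l * m) / 2 / (l * m) - 1) / 3)) (α / l) with hd
    have hd1 : d ≤ 1 := le_trans (min_le_left _ _) (min_le_left _ _)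
    have hd2 : d ≤ ((1 + l * m) / 2 / (l * m) - 1) / 3 :=
      le_trans (min_le_left _ _) (min_le_right _ _)
    have hd0 : 0 ≤ d := le_of_lt (lt_min (lt_min one_pos hδ₂aux) (by positivity))
    have h3 : l * m * (3 * d) ≤ l * m * (3 * (((1 + l * m) / 2 / (l * m) - 1) / 3)) := by
      nlinarith [mul_pos hl hm]
    have h4 : l * m * (3 * (((1 + l * m) / 2 / (l * m) - 1) / 3)) = (1 + l * m) / 2 - l * m := by
      field_simp
    nlinarith [mul_pos hl hm]
  have key : ∀ δ ∈ Ioc (0:ℝ) δ₂,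
      EMetric.infEdist x Fix ≤
        ENNReal.ofReal (l * (1 + δ) * (e + δ) / (1 - l * m * (1 + δ)^2)) := by
    rintro δ ⟨hδ0, hδ2⟩
    have hδ1 : δ ≤ 1 := le_trans hδ2 hδ₂1
    have hδα : δ ≤ α / l := le_trans hδ2 hδ₂α
    obtain ⟨q, hqdef⟩ : ∃ q : ℝ, q = l * m * (1 + δ)^2 := ⟨_, rfl⟩
    have hq0 : 0 < q := by rw [hqdef]; positivity
    have hqbar : q ≤ (1 + l * m) / 2 := by
      rw [hqdef]
      have h0 : (1 + δ)^2 ≤ (1 + δ₂)^2 := by nlinarith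
      have h0' := mul_le_mul_of_nonneg_left h0 (mul_pos hl hm).le
      linarith [hδ₂q]
    have hq1 : q < 1 := by linarith
    have h1q0 : 0 < 1 - q := by linarith
    have h1qs : s / 2 ≤ 1 - q := by rw [hsdef]; linarith
    obtain ⟨C, hCdef⟩ : ∃ C : ℝ, C = l * (1 + δ) * (e + δ) := ⟨_, rfl⟩
    have heδ : 0 < e + δ := by linarith
    have hC0 : 0 < C := by
      rw [hCdef]; exact mul_pos (mul_pos hl (by linarith)) heδ
    have hed : e + δ ≤ 2 * (α / l) := by linarith
    have hC4 : C ≤ 4 * α := by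
      have hel' : e * l < α := (lt_div_iff₀ hl).1 hel
      have hδl : δ * l ≤ α := (le_div_iff₀ hl).1 hδα
      have h9 : l * (e + δ) ≤ 2 * α := by linarith [mul_comm l e, mul_comm l δ]
      rw [hCdef]
      nlinarith [mul_pos hl heδ, mul_nonneg (by linarith : (0:ℝ) ≤ 1 - δ) (mul_pos hl heδ).le]
    have hCq : C / (1 - q) ≤ 8 * α / s := by
      calc C / (1 - q) ≤ (4 * α) / (s / 2) := div_le_div₀ (by positivity) hC4 (by positivity) h1qs
        _ = 8 * α / s := by field_simp; ring
    have hEq : (e + δ) / (1 - q) ≤ 4 * α / (l * s) := by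
      calc (e + δ) / (1 - q) ≤ (2 * (α / l)) / (s / 2) :=
            div_le_div₀ (by positivity) hed (by positivity) h1qs
        _ = 4 * α / (l * s) := by field_simp; ring
    have hρs : ρ * s ≤ ρ := by nlinarith [mul_le_mul_of_nonneg_left hs1 hρ.le]
    have hαρ1 : 8 * α / s + α ≤ ρ := by
      have h1 : 8 * α / s ≤ 2 * ρ / 3 := by rw [div_le_iff₀ hs]; nlinarith
      have h2 : α ≤ ρ / 3 := by nlinarith
      linarith
    have hβρ : 4 * α / (l * s) + 2 * (α / l) + ρ / 2 ≤ ρ := by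
      have h1 : 4 * α / (l * s) ≤ ρ / 3 := by rw [div_le_iff₀ (by positivity)]; nlinarith
      have h2 : 2 * (α / l) ≤ ρ / 6 := by
        have h2' : α / l ≤ ρ * s / 12 := by rw [div_le_iff₀ hl]; nlinarith
        linarith
      linarith
    have hmem_x : ∀ a : X, dist x a ≤ 8 * α / s → a ∈ closedBall x₀ ρ := by
      intro a ha
      rw [mem_closedBall]
      calc dist a x₀ ≤ dist a x + dist x x₀ := dist_triangle _ _ _
        _ ≤ 8 * α / s + α := by rw [dist_comm]; linarith
        _ ≤ ρ := hαρ1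
    -- choose the starting points
    have hεlt : ε < ENNReal.ofReal (e + δ) := by
      rw [hεe]
      exact (ENNReal.ofReal_lt_ofReal_iff heδ).2 (by linarith)
    rw [hεdef] at hεlt
    obtain ⟨y₁, hy₁mem, hy₁d⟩ := setDist2_lt hεlt
    obtain ⟨c₀, hc₀F, hc₀d⟩ := EMetric.infEdist_lt_iff.1 hy₁d
    have hy₁F : y₁ ∈ F₁ x := hy₁mem.1
    have hy₁b : dist y₁ y₀ < ρ / 2 := mem_ball.1 hy₁mem.2
    have hdy₁c₀ : dist y₁ c₀ < e + δ := edist_lt_ofReal.1 hc₀d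
    have hmem_y : ∀ b : Y, dist y₁ b ≤ 4 * α / (l * s) + 2 * (α / l) → b ∈ closedBall y₀ ρ := by
      intro b hb
      rw [mem_closedBall]
      calc dist b y₀ ≤ dist b y₁ + dist y₁ y₀ := dist_triangle _ _ _
        _ ≤ (4 * α / (l * s) + 2 * (α / l)) + ρ / 2 := by rw [dist_comm]; linarith
        _ ≤ ρ := hβρ
    have hlC : l * (e + δ) < C := by
      rw [hCdef]
      nlinarith [mul_pos hl heδ]
    have hmC : m * C < (e + δ) * q := by
      rw [hCdef, hqdef]
      nlinarith [mul_pos hδ0 (mul_pos (mul_pos (mul_pos hm hl)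
        (show (0:ℝ) < 1 + δ by linarith)) heδ)]
    have hmx : ∀ a : X, dist x a ≤ C / (1 - q) → a ∈ closedBall x₀ ρ := by
      intro a ha
      apply hmem_x
      linarith [hCq]
    have hmy : ∀ b : Y, dist y₁ b ≤ (e + δ) / (1 - q) + (e + δ) → b ∈ closedBall y₀ ρ := by
      intro b hb
      apply hmem_y
      linarith [hEq, hed]
    obtain ⟨z, hzfix, hdz⟩ := iterate_aux F₁ F₂ x₀ y₀ l m hl hm r₁ r₂ hc₁ hc₂
      U₁ V₁ U₂ V₂ hregs hAubs ρ hρr₁ hρr₂ hρU₁ hρV₁ hρU₂ hρV₂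
      x y₁ c₀ hy₁F hc₀F q C (e + δ) hq0 hq1 hC0 heδ hdy₁c₀.le hlC hmC hmx hmy
    calc EMetric.infEdist x Fix ≤ edist x z := EMetric.infEdist_le_edist_of_mem hzfix
      _ = ENNReal.ofReal (dist x z) := edist_dist _ _
      _ ≤ ENNReal.ofReal (C / (1 - q)) := ENNReal.ofReal_le_ofReal hdz
      _ = ENNReal.ofReal (l * (1 + δ) * (e + δ) / (1 - l * m * (1 + δ)^2)) := by
          rw [hCdef, hqdef]
  -- limit argument
  have hcont : ContinuousAt (fun δ : ℝ => l * (1 + δ) * (e + δ) / (1 - l * m * (1 + δ)^2)) 0 := by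
    apply ContinuousAt.div
    · fun_prop
    · fun_prop
    · norm_num
      nlinarith
  have htend : Tendsto (fun δ : ℝ => ENNReal.ofReal (l * (1 + δ) * (e + δ) / (1 - l * m * (1 + δ)^2)))
      (𝓝[>] (0:ℝ)) (𝓝 (ENNReal.ofReal (l * e / s))) := by
    have h8 : Tendsto (fun δ : ℝ => ENNReal.ofReal (l * (1 + δ) * (e + δ) / (1 - l * m * (1 + δ)^2)))
        (𝓝 (0:ℝ)) (𝓝 (ENNReal.ofReal (l * (1 + 0) * (e + 0) / (1 - l * m * (1 + 0)^2)))) :=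
      (ENNReal.continuous_ofReal.continuousAt.comp hcont)
    norm_num at h8
    convert h8.mono_left nhdsWithin_le_nhds using 2
    rw [hsdef]
  have hfin : EMetric.infEdist x Fix ≤ ENNReal.ofReal (l * e / s) := by
    refine ge_of_tendsto htend ?_
    filter_upwards [Ioc_mem_nhdsGT_of_mem ⟨le_refl (0:ℝ), hδ₂pos⟩] with δ hδ
    exact key δ hδ
  calc EMetric.infEdist x Fix ≤ ENNReal.ofReal (l * e / s) := hfin
    _ = K * ε := by
        rw [hεe, hKdef, hKinv, ← ENNReal.ofReal_mul (by positivity)]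
        ring_nf
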